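/- arXiv:2010.13675 — 2 statements merged into one kernel-verified Lean document; each statement's English description precedes it below -/
import Mathlib

section
/- In the setting of the chosen (E,M)-factorizations N_{Q,T} of the canonical morphisms c_{Q,T}: (i) for Q ⊆ Q' there is a unique morphism u_{Q⊆Q',T} : N_{Q,T} → N_{Q',T} with u_{Q⊆Q',T} ∘ e_{Q,T} = e_{Q',T} ∘ (canonical inclusion ∐_Q X → ∐_{Q'} X) and m_{Q',T} ∘ u_{Q⊆Q',T} = m_{Q,T}, and this morphism lies in M; (ii) for T ⊆ T' there is a unique morphism v_{Q,T⊆T'} : N_{Q,T'} → N_{Q,T} with v_{Q,T⊆T'} ∘ e_{Q,T'} = e_{Q,T} and m_{Q,T} ∘ v_{Q,T⊆T'} = (canonical restriction ∏_{T'} Y → ∏_T Y) ∘ m_{Q,T'}, and this morphism lies in E; (iii) these canonical morphisms compose: for Q ⊆ Q' ⊆ Q'', u_{Q'⊆Q'',T} ∘ u_{Q⊆Q',T} = u_{Q⊆Q'',T}, and for T ⊆ T' ⊆ T'', v_{Q,T⊆T'} ∘ v_{Q,T'⊆T''} = v_{Q,T⊆T''}. -/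
open CategoryTheory

/-- A factorization system `(E, M)` on a category `C`. -/
structure FactSys {C : Type*} [Category C] (E M : MorphismProperty C) : Prop where
  E_iso : ∀ {X Y : C} (f : X ⟶ Y), IsIso f → E f
  M_iso : ∀ {X Y : C} (f : X ⟶ Y), IsIso f → M f
  E_comp : ∀ {X Y Z : C} (f : X ⟶ Y) (g : Y ⟶ Z), E f → E g → E (f ≫ g)
  M_comp : ∀ {X Y Z : C} (f : X ⟶ Y) (g : Y ⟶ Z), M f → M g → M (f ≫ g)
  fact : ∀ {X Y : C} (f : X ⟶ Y), ∃ (Z : C) (e : X ⟶ Z) (m : Z ⟶ Y), E e ∧ M m ∧ e ≫ m = f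
  diag : ∀ {X Y Z W : C} (e : X ⟶ Y) (m : Z ⟶ W) (u : X ⟶ Z) (v : Y ⟶ W),
    E e → M m → e ≫ v = u ≫ m → ∃! d : Y ⟶ Z, e ≫ d = u ∧ d ≫ m = v

/-- The setting of the chosen `(E,M)`-factorizations `N Q T` of the canonical morphisms
`c_{Q,T} : ∐_Q X ⟶ ∏_T Y` induced by the language `ℓ`: for every `Q` there is a copower
`P Q` of `X` over `Q` (with injections `ι`), for every `T` a power `R T` of `Y` over `T`
(with projections `π`), and for all `Q, T` a chosen factorization
`e Q T : P Q ⟶ N Q T` in `E`, `m Q T : N Q T ⟶ R T` in `M` of `c_{Q,T}`. -/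
structure Setup (A : Type) {C : Type*} [Category C] (E M : MorphismProperty C)
    (X Y : C) (ℓ : List A → (X ⟶ Y)) where
  P : Set (List A) → C
  ι : ∀ (Q : Set (List A)) (q : List A), q ∈ Q → (X ⟶ P Q)
  hP : ∀ (Q : Set (List A)) (Z : C) (f : ∀ q : List A, q ∈ Q → (X ⟶ Z)),
    ∃! g : P Q ⟶ Z, ∀ (q : List A) (hq : q ∈ Q), ι Q q hq ≫ g = f q hq
  R : Set (List A) → C
  π : ∀ (T : Set (List A)) (t : List A), t ∈ T → (R T ⟶ Y)
  hR : ∀ (T : Set (List A)) (Z : C) (f : ∀ t : List A, t ∈ T → (Z ⟶ Y)),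
    ∃! g : Z ⟶ R T, ∀ (t : List A) (ht : t ∈ T), g ≫ π T t ht = f t ht
  N : Set (List A) → Set (List A) → C
  e : ∀ Q T : Set (List A), P Q ⟶ N Q T
  m : ∀ Q T : Set (List A), N Q T ⟶ R T
  he : ∀ Q T : Set (List A), E (e Q T)
  hm : ∀ Q T : Set (List A), M (m Q T)
  hfact : ∀ (Q T : Set (List A)) (q : List A) (hq : q ∈ Q) (t : List A) (ht : t ∈ T),
    ι Q q hq ≫ e Q T ≫ m Q T ≫ π T t ht = ℓ (q ++ t)

namespace Setup

variable {A : Type} {C : Type*} [Category C] {E M : MorphismProperty C}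
  {X Y : C} {ℓ : List A → (X ⟶ Y)}

/-- `u` is the canonical morphism `u_{Q⊆Q',T} : N Q T ⟶ N Q' T`:
it satisfies `u ∘ e_{Q,T} = e_{Q',T} ∘ (canonical inclusion)` and
`m_{Q',T} ∘ u = m_{Q,T}`. -/
def IsU (S : Setup A E M X Y ℓ) {Q Q' : Set (List A)} (T : Set (List A))
    (h : Q ⊆ Q') (u : S.N Q T ⟶ S.N Q' T) : Prop :=
  (∀ (q : List A) (hq : q ∈ Q),
    S.ι Q q hq ≫ S.e Q T ≫ u = S.ι Q' q (h hq) ≫ S.e Q' T) ∧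
  u ≫ S.m Q' T = S.m Q T

/-- `v` is the canonical morphism `v_{Q,T⊆T'} : N Q T' ⟶ N Q T`:
it satisfies `v ∘ e_{Q,T'} = e_{Q,T}` and
`m_{Q,T} ∘ v = (canonical restriction) ∘ m_{Q,T'}`. -/
def IsV (S : Setup A E M X Y ℓ) {T T' : Set (List A)} (Q : Set (List A))
    (h : T ⊆ T') (v : S.N Q T' ⟶ S.N Q T) : Prop :=
  (S.e Q T' ≫ v = S.e Q T) ∧
  (∀ (t : List A) (ht : t ∈ T),
    v ≫ S.m Q T ≫ S.π T t ht = S.m Q T' ≫ S.π T' t (h ht))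

end Setup

section Aux

variable {A : Type} {C : Type*} [Category C] {E M : MorphismProperty C}
  {X Y : C} {ℓ : List A → (X ⟶ Y)}

/-- Extensionality for morphisms out of the copower. -/
lemma P_ext (S : Setup A E M X Y ℓ) {Q : Set (List A)} {Z : C} {f g : S.P Q ⟶ Z}
    (h : ∀ q (hq : q ∈ Q), S.ι Q q hq ≫ f = S.ι Q q hq ≫ g) : f = g := by
  obtain ⟨k, hk, hu⟩ := S.hP Q Z (fun q hq => S.ι Q q hq ≫ f)
  exact (hu f fun q hq => rfl).trans (hu g fun q hq => (h q hq).symm).symm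

/-- Extensionality for morphisms into the power. -/
lemma R_ext (S : Setup A E M X Y ℓ) {T : Set (List A)} {Z : C} {f g : Z ⟶ S.R T}
    (h : ∀ t (ht : t ∈ T), f ≫ S.π T t ht = g ≫ S.π T t ht) : f = g := by
  obtain ⟨k, hk, hu⟩ := S.hR T Z (fun t ht => f ≫ S.π T t ht)
  exact (hu f fun t ht => rfl).trans (hu g fun t ht => (h t ht).symm).symm

/-- Left cancellation for `M`. -/
lemma M_cancel (fs : FactSys E M) {W Z V : C} {f : W ⟶ Z} {g : Z ⟶ V}
    (hg : M g) (hfg : M (f ≫ g)) : M f := by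
  obtain ⟨Z₁, e₁, m₁, he₁, hm₁, hc⟩ := fs.fact f
  obtain ⟨d, ⟨hd1, hd2⟩, _⟩ := fs.diag e₁ (f ≫ g) (𝟙 W) (m₁ ≫ g) he₁ hfg
    (by rw [Category.id_comp, ← hc, Category.assoc])
  have hdf : d ≫ f = m₁ := by
    obtain ⟨d', _, hu'⟩ := fs.diag e₁ g f (m₁ ≫ g) he₁ hg
      (by rw [← hc, Category.assoc])
    refine (hu' (d ≫ f) ⟨by rw [← Category.assoc, hd1, Category.id_comp],
      by rw [Category.assoc, hd2]⟩).trans (hu' m₁ ⟨hc, rfl⟩).symm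
  have hde : d ≫ e₁ = 𝟙 Z₁ := by
    obtain ⟨d', _, hu'⟩ := fs.diag e₁ m₁ e₁ m₁ he₁ hm₁ rfl
    refine (hu' (d ≫ e₁) ⟨by rw [← Category.assoc, hd1, Category.id_comp],
      by rw [Category.assoc, hc, hdf]⟩).trans (hu' (𝟙 Z₁)
      ⟨Category.comp_id _, Category.id_comp _⟩).symm
  have : IsIso e₁ := ⟨d, hd1, hde⟩
  exact hc ▸ fs.M_comp e₁ m₁ (fs.M_iso e₁ this) hm₁

/-- Right cancellation for `E`. -/
lemma E_cancel (fs : FactSys E M) {W Z V : C} {e : W ⟶ Z} {g : Z ⟶ V}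
    (he : E e) (heg : E (e ≫ g)) : E g := by
  obtain ⟨Z₂, e₂, m₂, he₂, hm₂, hc⟩ := fs.fact g
  obtain ⟨d, ⟨hd1, hd2⟩, _⟩ := fs.diag (e ≫ g) m₂ (e ≫ e₂) (𝟙 V) heg hm₂
    (by rw [Category.comp_id, Category.assoc, hc])
  have hgd : g ≫ d = e₂ := by
    obtain ⟨d', _, hu'⟩ := fs.diag e m₂ (e ≫ e₂) g he hm₂
      (by rw [Category.assoc, hc])
    refine (hu' (g ≫ d) ⟨by rw [← Category.assoc, hd1],
      by rw [Category.assoc, hd2, Category.comp_id]⟩).trans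
      (hu' e₂ ⟨rfl, hc⟩).symm
  have hmd : m₂ ≫ d = 𝟙 Z₂ := by
    obtain ⟨d', _, hu'⟩ := fs.diag (e ≫ e₂) m₂ (e ≫ e₂) m₂
      (fs.E_comp e e₂ he he₂) hm₂ rfl
    refine (hu' (m₂ ≫ d) ⟨by rw [Category.assoc, ← Category.assoc e₂, hc, hgd],
      by rw [Category.assoc, hd2, Category.comp_id]⟩).trans
      (hu' (𝟙 Z₂) ⟨Category.comp_id _, Category.id_comp _⟩).symm
  have : IsIso m₂ := ⟨d, hmd, hd2⟩
  exact hc ▸ fs.E_comp e₂ m₂ he₂ (fs.E_iso m₂ this)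

/-- Uniqueness of `u`. -/
lemma U_unique (fs : FactSys E M) (S : Setup A E M X Y ℓ) {Q Q' T : Set (List A)}
    (h : Q ⊆ Q') {u u' : S.N Q T ⟶ S.N Q' T} (hu : S.IsU T h u) (hu' : S.IsU T h u') :
    u = u' := by
  have heq : S.e Q T ≫ u = S.e Q T ≫ u' := P_ext S fun q hq => by
    rw [← Category.assoc, ← Category.assoc, Category.assoc, Category.assoc,
      hu.1 q hq, hu'.1 q hq]
  obtain ⟨d, _, hd⟩ := fs.diag (S.e Q T) (S.m Q' T) (S.e Q T ≫ u) (S.m Q T)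
    (S.he Q T) (S.hm Q' T) (by rw [Category.assoc, hu.2])
  exact (hd u ⟨rfl, hu.2⟩).trans (hd u' ⟨heq.symm, hu'.2⟩).symm

/-- Uniqueness of `v`. -/
lemma V_unique (fs : FactSys E M) (S : Setup A E M X Y ℓ) {Q T T' : Set (List A)}
    (h : T ⊆ T') {v v' : S.N Q T' ⟶ S.N Q T} (hv : S.IsV Q h v) (hv' : S.IsV Q h v') :
    v = v' := by
  have hmeq : v ≫ S.m Q T = v' ≫ S.m Q T := R_ext S fun t ht => by
    rw [Category.assoc, Category.assoc, hv.2 t ht, hv'.2 t ht]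
  obtain ⟨d, _, hd⟩ := fs.diag (S.e Q T') (S.m Q T) (S.e Q T) (v ≫ S.m Q T)
    (S.he Q T') (S.hm Q T) (by rw [← Category.assoc, hv.1])
  exact (hd v ⟨hv.1, rfl⟩).trans (hd v' ⟨hv'.1, hmeq.symm⟩).symm

end Aux

/-- existence, uniqueness, `E`/`M`-membership and functoriality of the
canonical morphisms `u_{Q⊆Q',T}` and `v_{Q,T⊆T'}` between the factorizations `N Q T`. -/
theorem stmt13 {A : Type} [Fintype A] {C : Type*} [Category C]
    (E M : MorphismProperty C) (fs : FactSys E M) {X Y : C}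
    (ℓ : List A → (X ⟶ Y)) (S : Setup A E M X Y ℓ) :
    (∀ (Q Q' T : Set (List A)) (h : Q ⊆ Q'),
      (∃! u : S.N Q T ⟶ S.N Q' T, S.IsU T h u) ∧
      (∀ u : S.N Q T ⟶ S.N Q' T, S.IsU T h u → M u)) ∧
    (∀ (Q T T' : Set (List A)) (h : T ⊆ T'),
      (∃! v : S.N Q T' ⟶ S.N Q T, S.IsV Q h v) ∧
      (∀ v : S.N Q T' ⟶ S.N Q T, S.IsV Q h v → E v)) ∧
    (∀ (Q Q' Q'' T : Set (List A)) (h1 : Q ⊆ Q') (h2 : Q' ⊆ Q'')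
        (u1 : S.N Q T ⟶ S.N Q' T) (u2 : S.N Q' T ⟶ S.N Q'' T)
        (u3 : S.N Q T ⟶ S.N Q'' T),
      S.IsU T h1 u1 → S.IsU T h2 u2 → S.IsU T (h1.trans h2) u3 →
      u1 ≫ u2 = u3) ∧
    (∀ (Q T T' T'' : Set (List A)) (h1 : T ⊆ T') (h2 : T' ⊆ T'')
        (v1 : S.N Q T' ⟶ S.N Q T) (v2 : S.N Q T'' ⟶ S.N Q T')
        (v3 : S.N Q T'' ⟶ S.N Q T),
      S.IsV Q h1 v1 → S.IsV Q h2 v2 → S.IsV Q (h1.trans h2) v3 →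
      v2 ≫ v1 = v3) := by
  refine ⟨fun Q Q' T h => ?_, fun Q T T' h => ?_, ?_, ?_⟩
  · -- existence/uniqueness/M-membership of u
    obtain ⟨inc, hinc, _⟩ := S.hP Q (S.P Q') (fun q hq => S.ι Q' q (h hq))
    have hsq : S.e Q T ≫ S.m Q T = (inc ≫ S.e Q' T) ≫ S.m Q' T := by
      refine P_ext S fun q hq => ?_
      refine R_ext S fun t ht => ?_
      simp only [Category.assoc]
      rw [S.hfact Q T q hq t ht, ← Category.assoc (S.ι Q q hq) inc, hinc q hq,
        S.hfact Q' T q (h hq) t ht]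
    obtain ⟨d, ⟨hd1, hd2⟩, _⟩ := fs.diag (S.e Q T) (S.m Q' T) (inc ≫ S.e Q' T)
      (S.m Q T) (S.he Q T) (S.hm Q' T) hsq
    have hIsU : S.IsU T h d := by
      refine ⟨fun q hq => ?_, hd2⟩
      rw [← Category.assoc, Category.assoc, hd1, ← Category.assoc, hinc q hq]
    refine ⟨⟨d, hIsU, fun u hu => U_unique fs S h hu hIsU⟩, fun u hu => ?_⟩
    exact M_cancel fs (S.hm Q' T) (hu.2 ▸ S.hm Q T)
  · -- existence/uniqueness/E-membership of v
    obtain ⟨res, hres, _⟩ := S.hR T (S.R T') (fun t ht => S.π T' t (h ht))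
    have hsq : S.e Q T' ≫ S.m Q T' ≫ res = S.e Q T ≫ S.m Q T := by
      refine P_ext S fun q hq => ?_
      refine R_ext S fun t ht => ?_
      simp only [Category.assoc]
      rw [hres t ht, S.hfact Q T' q hq t (h ht), S.hfact Q T q hq t ht]
    obtain ⟨d, ⟨hd1, hd2⟩, _⟩ := fs.diag (S.e Q T') (S.m Q T) (S.e Q T)
      (S.m Q T' ≫ res) (S.he Q T') (S.hm Q T) hsq
    have hIsV : S.IsV Q h d := by
      refine ⟨hd1, fun t ht => ?_⟩
      rw [← Category.assoc, hd2, Category.assoc, hres t ht]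
    refine ⟨⟨d, hIsV, fun v hv => V_unique fs S h hv hIsV⟩, fun v hv => ?_⟩
    exact E_cancel fs (S.he Q T') (hv.1 ▸ S.he Q T)
  · -- functoriality of u
    intro Q Q' Q'' T h1 h2 u1 u2 u3 hu1 hu2 hu3
    refine U_unique fs S (h1.trans h2) ⟨fun q hq => ?_, ?_⟩ hu3
    · have h1' := hu1.1 q hq
      have h2' := hu2.1 q (h1 hq)
      simp only [← Category.assoc] at h1' h2' ⊢
      rw [h1', h2']
    · rw [Category.assoc, hu2.2, hu1.2]
  · -- functoriality of v
    intro Q T T' T'' h1 h2 v1 v2 v3 hv1 hv2 hv3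
    refine V_unique fs S (h1.trans h2) ⟨?_, fun t ht => ?_⟩ hv3
    · rw [← Category.assoc, hv2.1, hv1.1]
    · rw [Category.assoc, hv1.2 t ht, hv2.2 t (h1 ht)]
end

section
/- Assume C has all copowers of X and all powers of Y indexed by subsets of List A, and suppose N_{List A, List A} is (E,M)-noetherian. Let (Q_i, T_i)_{i∈ℕ} be a sequence of pairs of subsets of List A such that for every i either (a) Q_i ⊆ Q_{i+1} and T_i = T_{i+1}, or (b) Q_i = Q_{i+1} and T_i ⊆ T_{i+1}. Then for all but finitely many i the corresponding canonical morphism — u_{Q_i⊆Q_{i+1}, T_i} : N_{Q_i,T_i} → N_{Q_{i+1},T_{i+1}} in case (a), and v_{Q_i, T_i⊆T_{i+1}} : N_{Q_{i+1},T_{i+1}} → N_{Q_i,T_i} in case (b) — is an isomorphism. -/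
open CategoryTheory

/-- An object `X` is `(E,M)`-noetherian: no infinite cochain of non-invertible
`E`-quotients and no infinite chain of non-invertible `M`-subobjects. -/
def Noetherian {C : Type*} [Category C] (E M : MorphismProperty C) (X : C) : Prop :=
  (¬ ∃ (Y : ℕ → C) (f : ∀ n, X ⟶ Y n) (e : ∀ n, Y (n + 1) ⟶ Y n),
    (∀ n, E (f n)) ∧ (∀ n, E (e n)) ∧
    (∀ n, f (n + 1) ≫ e n = f n) ∧ (∀ n, ¬ IsIso (e n))) ∧
  (¬ ∃ (Z : ℕ → C) (g : ∀ n, Z n ⟶ X) (m : ∀ n, Z n ⟶ Z (n + 1)),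
    (∀ n, M (g n)) ∧ (∀ n, M (m n)) ∧
    (∀ n, m n ≫ g (n + 1) = g n) ∧ (∀ n, ¬ IsIso (m n)))
namespace FactSys
variable {C : Type*} [Category C] {E M : MorphismProperty C} (fs : FactSys E M)
include fs

lemma diag_unique {X Y Z W : C} {e : X ⟶ Y} {m : Z ⟶ W} (he : E e) (hm : M m)
    {d1 d2 : Y ⟶ Z} (h1 : e ≫ d1 = e ≫ d2) (h2 : d1 ≫ m = d2 ≫ m) : d1 = d2 := by
  obtain ⟨d, -, hd⟩ := fs.diag e m (e ≫ d1) (d1 ≫ m) he hm (by rw [Category.assoc])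
  rw [hd d1 ⟨rfl, rfl⟩, hd d2 ⟨h1.symm, h2.symm⟩]

lemma iso_of_both {X Y : C} {f : X ⟶ Y} (hE : E f) (hM : M f) : IsIso f := by
  obtain ⟨d, ⟨hd1, hd2⟩, -⟩ := fs.diag f f (𝟙 _) (𝟙 _) hE hM (by simp)
  exact ⟨d, hd1, hd2⟩

lemma E_cancel {X Y Z : C} {f : X ⟶ Y} {g : Y ⟶ Z} (hfg : E (f ≫ g)) (hf : E f) : E g := by
  obtain ⟨I, e, m, he, hm, hem⟩ := fs.fact g
  obtain ⟨d, ⟨hd1, hd2⟩, -⟩ := fs.diag (f ≫ g) m (f ≫ e) (𝟙 _) hfg hm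
    (by rw [Category.comp_id, ← hem, Category.assoc])
  have key : e ≫ m ≫ d = e := by
    apply fs.diag_unique hf hm
    · calc f ≫ e ≫ m ≫ d = (f ≫ (e ≫ m)) ≫ d := by simp only [Category.assoc]
        _ = (f ≫ g) ≫ d := by rw [hem]
        _ = f ≫ e := hd1
    · calc (e ≫ m ≫ d) ≫ m = e ≫ m ≫ (d ≫ m) := by simp only [Category.assoc]
        _ = e ≫ m := by rw [hd2, Category.comp_id]
  have hmd : m ≫ d = 𝟙 _ := by
    apply fs.diag_unique he hm
    · rw [key, Category.comp_id]
    · rw [Category.assoc, hd2, Category.comp_id, Category.id_comp]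
  have : IsIso m := ⟨d, hmd, hd2⟩
  rw [← hem]
  exact fs.E_comp _ _ he (fs.E_iso _ this)

lemma M_cancel {X Y Z : C} {f : X ⟶ Y} {g : Y ⟶ Z} (hfg : M (f ≫ g)) (hg : M g) : M f := by
  obtain ⟨I, e, m, he, hm, hem⟩ := fs.fact f
  obtain ⟨d, ⟨hd1, hd2⟩, -⟩ := fs.diag e (f ≫ g) (𝟙 _) (m ≫ g) he hfg
    (by rw [Category.id_comp, ← hem, Category.assoc])
  have hde : d ≫ e = 𝟙 _ := by
    apply fs.diag_unique he (fs.M_comp _ _ hm hg)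
    · rw [← Category.assoc, hd1, Category.id_comp, Category.comp_id]
    · calc (d ≫ e) ≫ m ≫ g = d ≫ ((e ≫ m) ≫ g) := by simp only [Category.assoc]
        _ = d ≫ (f ≫ g) := by rw [hem]
        _ = m ≫ g := hd2
        _ = 𝟙 _ ≫ m ≫ g := by rw [Category.id_comp]
  have : IsIso e := ⟨d, hd1, hde⟩
  rw [← hem]
  exact fs.M_comp _ _ (fs.M_iso _ this) hm

end FactSys

namespace Setup
variable {A : Type} {C : Type*} [Category C] {E M : MorphismProperty C}
  {X Y : C} {ℓ : List A → (X ⟶ Y)} (S : Setup A E M X Y ℓ)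
lemma Pext {Q : Set (List A)} {Z : C} {f g : S.P Q ⟶ Z}
    (h : ∀ q (hq : q ∈ Q), S.ι Q q hq ≫ f = S.ι Q q hq ≫ g) : f = g := by
  obtain ⟨k, -, hk⟩ := S.hP Q Z (fun q hq => S.ι Q q hq ≫ g)
  rw [hk f h, hk g (fun q hq => rfl)]

lemma Rext {T : Set (List A)} {Z : C} {f g : Z ⟶ S.R T}
    (h : ∀ t (ht : t ∈ T), f ≫ S.π T t ht = g ≫ S.π T t ht) : f = g := by
  obtain ⟨k, -, hk⟩ := S.hR T Z (fun t ht => g ≫ S.π T t ht)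
  rw [hk f h, hk g (fun t ht => rfl)]

lemma hom_ext (fs : FactSys E M) {Q T Q' T' : Set (List A)} {f g : S.N Q T ⟶ S.N Q' T'}
    (h1 : ∀ q (hq : q ∈ Q), S.ι Q q hq ≫ S.e Q T ≫ f = S.ι Q q hq ≫ S.e Q T ≫ g)
    (h2 : ∀ t (ht : t ∈ T'), f ≫ S.m Q' T' ≫ S.π T' t ht = g ≫ S.m Q' T' ≫ S.π T' t ht) :
    f = g := by
  apply fs.diag_unique (S.he Q T) (S.hm Q' T')
  · exact S.Pext (fun q hq => by simpa [Category.assoc] using h1 q hq)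
  · exact S.Rext (fun t ht => by simpa [Category.assoc] using h2 t ht)

lemma isU_exists (fs : FactSys E M) {Q Q' : Set (List A)} (h : Q ⊆ Q') (T : Set (List A)) :
    ∃ u, S.IsU T h u := by
  obtain ⟨j, hj, -⟩ := S.hP Q (S.P Q') (fun q hq => S.ι Q' q (h hq))
  have sq : S.e Q T ≫ S.m Q T = (j ≫ S.e Q' T) ≫ S.m Q' T := by
    apply S.Pext; intro q hq
    apply S.Rext; intro t ht
    simp only [Category.assoc]
    rw [S.hfact Q T q hq t ht, reassoc_of% (hj q hq), S.hfact Q' T q (h hq) t ht]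
  obtain ⟨d, ⟨hd1, hd2⟩, -⟩ := fs.diag (S.e Q T) (S.m Q' T) (j ≫ S.e Q' T) (S.m Q T)
    (S.he Q T) (S.hm Q' T) sq
  refine ⟨d, fun q hq => ?_, hd2⟩
  rw [hd1, reassoc_of% (hj q hq)]

lemma isV_exists (fs : FactSys E M) {T T' : Set (List A)} (k : T ⊆ T') (Q : Set (List A)) :
    ∃ v, S.IsV Q k v := by
  obtain ⟨r, hr, -⟩ := S.hR T (S.R T') (fun t ht => S.π T' t (k ht))
  have sq : S.e Q T' ≫ (S.m Q T' ≫ r) = S.e Q T ≫ S.m Q T := by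
    apply S.Pext; intro q hq
    apply S.Rext; intro t ht
    simp only [Category.assoc]
    rw [hr t ht, S.hfact Q T' q hq t (k ht), S.hfact Q T q hq t ht]
  obtain ⟨d, ⟨hd1, hd2⟩, -⟩ := fs.diag (S.e Q T') (S.m Q T) (S.e Q T) (S.m Q T' ≫ r)
    (S.he Q T') (S.hm Q T) sq
  exact ⟨d, hd1, fun t ht => by rw [reassoc_of% hd2, hr t ht]⟩

lemma isU_unique (fs : FactSys E M) {Q Q' T : Set (List A)} {h : Q ⊆ Q'}
    {u1 u2 : S.N Q T ⟶ S.N Q' T} (h1 : S.IsU T h u1) (h2 : S.IsU T h u2) : u1 = u2 := by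
  refine S.hom_ext fs (fun q hq => ?_) (fun t ht => ?_)
  · rw [h1.1 q hq, h2.1 q hq]
  · rw [reassoc_of% h1.2, reassoc_of% h2.2]

lemma isV_unique (fs : FactSys E M) {T T' Q : Set (List A)} {k : T ⊆ T'}
    {v1 v2 : S.N Q T' ⟶ S.N Q T} (h1 : S.IsV Q k v1) (h2 : S.IsV Q k v2) : v1 = v2 := by
  refine S.hom_ext fs (fun q hq => ?_) (fun t ht => ?_)
  · rw [h1.1, h2.1]
  · rw [h1.2 t ht, h2.2 t ht]

lemma isU_M (fs : FactSys E M) {Q Q' T : Set (List A)} {h : Q ⊆ Q'}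
    {u : S.N Q T ⟶ S.N Q' T} (hu : S.IsU T h u) : M u :=
  fs.M_cancel (hu.2 ▸ S.hm Q T) (S.hm Q' T)

lemma isV_E (fs : FactSys E M) {T T' Q : Set (List A)} {k : T ⊆ T'}
    {v : S.N Q T' ⟶ S.N Q T} (hv : S.IsV Q k v) : E v :=
  fs.E_cancel (hv.1 ▸ S.he Q T) (S.he Q T')

lemma isU_comp {Q Q' Q'' T : Set (List A)} {h1 : Q ⊆ Q'} {h2 : Q' ⊆ Q''}
    {u1 : S.N Q T ⟶ S.N Q' T} {u2 : S.N Q' T ⟶ S.N Q'' T}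
    (hu1 : S.IsU T h1 u1) (hu2 : S.IsU T h2 u2) :
    S.IsU T (h1.trans h2) (u1 ≫ u2) := by
  refine ⟨fun q hq => ?_, ?_⟩
  · have h1' := congrArg (· ≫ u2) (hu1.1 q hq)
    simp only [Category.assoc] at h1'
    rw [h1', hu2.1 q (h1 hq)]
  · rw [Category.assoc, hu2.2, hu1.2]

lemma isV_comp {T T' T'' Q : Set (List A)} {k1 : T ⊆ T'} {k2 : T' ⊆ T''}
    {v1 : S.N Q T' ⟶ S.N Q T} {v2 : S.N Q T'' ⟶ S.N Q T'}
    (hv1 : S.IsV Q k1 v1) (hv2 : S.IsV Q k2 v2) :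
    S.IsV Q (k1.trans k2) (v2 ≫ v1) := by
  refine ⟨?_, fun t ht => ?_⟩
  · rw [← Category.assoc, hv2.1, hv1.1]
  · simp only [Category.assoc]
    rw [hv1.2 t ht, hv2.2 t (k1 ht)]

lemma uv_comm (fs : FactSys E M) {Q Q' T T' : Set (List A)} (h : Q ⊆ Q') (k : T ⊆ T')
    {u : S.N Q T ⟶ S.N Q' T} (hu : S.IsU T h u)
    {u' : S.N Q T' ⟶ S.N Q' T'} (hu' : S.IsU T' h u')
    {v : S.N Q T' ⟶ S.N Q T} (hv : S.IsV Q k v)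
    {v' : S.N Q' T' ⟶ S.N Q' T} (hv' : S.IsV Q' k v') :
    v ≫ u = u' ≫ v' := by
  refine S.hom_ext fs (fun q hq => ?_) (fun t ht => ?_)
  · have r := congrArg (· ≫ v') (hu'.1 q hq)
    simp only [Category.assoc] at r
    have l1 : S.e Q T' ≫ v ≫ u = S.e Q T ≫ u := by rw [← Category.assoc, hv.1]
    rw [l1, hu.1 q hq, r, hv'.1]
  · have l2 : u ≫ S.m Q' T ≫ S.π T t ht = S.m Q T ≫ S.π T t ht := by
      rw [← Category.assoc, hu.2]
    have l2' : u' ≫ S.m Q' T' ≫ S.π T' t (k ht) = S.m Q T' ≫ S.π T' t (k ht) := by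
      rw [← Category.assoc, hu'.2]
    simp only [Category.assoc]
    rw [l2, hv.2 t ht, hv'.2 t ht, l2']

lemma isU_iso (fs : FactSys E M) {Q Q' T : Set (List A)} {h : Q ⊆ Q'}
    {u : S.N Q T ⟶ S.N Q' T} (hu : S.IsU T h u)
    {w : S.N Q Set.univ ⟶ S.N Q' Set.univ} (hw : S.IsU Set.univ h w)
    (hiso : IsIso w) : IsIso u := by
  obtain ⟨v, hv⟩ := S.isV_exists fs (Set.subset_univ T) Q
  obtain ⟨v', hv'⟩ := S.isV_exists fs (Set.subset_univ T) Q'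
  have comm : v ≫ u = w ≫ v' := S.uv_comm fs h (Set.subset_univ T) hu hw hv hv'
  have hEvu : E (v ≫ u) := by
    rw [comm]; exact fs.E_comp _ _ (fs.E_iso _ hiso) (S.isV_E fs hv')
  exact fs.iso_of_both (fs.E_cancel hEvu (S.isV_E fs hv)) (S.isU_M fs hu)

lemma isV_iso (fs : FactSys E M) {T T' Q : Set (List A)} {k : T ⊆ T'}
    {v : S.N Q T' ⟶ S.N Q T} (hv : S.IsV Q k v)
    {z : S.N Set.univ T' ⟶ S.N Set.univ T} (hz : S.IsV Set.univ k z)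
    (hiso : IsIso z) : IsIso v := by
  obtain ⟨u, hu⟩ := S.isU_exists fs (Set.subset_univ Q) T
  obtain ⟨u', hu'⟩ := S.isU_exists fs (Set.subset_univ Q) T'
  have comm : v ≫ u = u' ≫ z := S.uv_comm fs (Set.subset_univ Q) k hu hu' hv hz
  have hMvu : M (v ≫ u) := by
    rw [comm]; exact fs.M_comp _ _ (S.isU_M fs hu') (fs.M_iso _ hiso)
  exact fs.iso_of_both (S.isV_E fs hv) (fs.M_cancel hMvu (S.isU_M fs hu))
end Setup

/-- along a sequence of pairs `(Q_i, T_i)` in which at each step either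
`Q` grows (and `T` stays fixed) or `T` grows (and `Q` stays fixed), all but finitely
many of the corresponding canonical morphisms between the factorizations `N Q T` are
isomorphisms, provided `N (List A) (List A)` is `(E,M)`-noetherian. -/
theorem stmt17 {A : Type} [Fintype A] {C : Type*} [Category C]
    (E M : MorphismProperty C) (fs : FactSys E M) {X Y : C}
    (ℓ : List A → (X ⟶ Y)) (S : Setup A E M X Y ℓ)
    (hnoeth : Noetherian E M (S.N Set.univ Set.univ))
    (Q T : ℕ → Set (List A))
    (hstep : ∀ i, (Q i ⊆ Q (i + 1) ∧ T i = T (i + 1)) ∨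
      (Q i = Q (i + 1) ∧ T i ⊆ T (i + 1))) :
    ∃ n₀ : ℕ, ∀ i ≥ n₀,
      (∀ hQ : Q i ⊆ Q (i + 1), T i = T (i + 1) →
        ∀ u : S.N (Q i) (T i) ⟶ S.N (Q (i + 1)) (T i),
          S.IsU (T i) hQ u → IsIso u) ∧
      (∀ hT : T i ⊆ T (i + 1), Q i = Q (i + 1) →
        ∀ v : S.N (Q i) (T (i + 1)) ⟶ S.N (Q i) (T i),
          S.IsV (Q i) hT v → IsIso v) := by
  by_contra hcon
  simp only [not_exists, not_forall, Classical.not_imp, ge_iff_le] at hcon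
  have hQs : ∀ i, Q i ⊆ Q (i + 1) := fun i => (hstep i).elim And.left (fun h => h.1.subset)
  have hTs : ∀ i, T i ⊆ T (i + 1) := fun i => (hstep i).elim (fun h => h.2.subset) And.right
  have hQm : ∀ {a b : ℕ}, a ≤ b → Q a ⊆ Q b := fun h => monotone_nat_of_le_succ hQs h
  have hTm : ∀ {a b : ℕ}, a ≤ b → T a ⊆ T b := fun h => monotone_nat_of_le_succ hTs h
  obtain ⟨W, hW⟩ : ∃ W : ∀ a b, a ≤ b → (S.N (Q a) Set.univ ⟶ S.N (Q b) Set.univ),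
      ∀ a b (h : a ≤ b), S.IsU Set.univ (hQm h) (W a b h) :=
    ⟨fun a b h => (S.isU_exists fs (hQm h) Set.univ).choose,
     fun a b h => (S.isU_exists fs (hQm h) Set.univ).choose_spec⟩
  obtain ⟨G, hG⟩ : ∃ G : ∀ a, (S.N (Q a) Set.univ ⟶ S.N Set.univ Set.univ),
      ∀ a, S.IsU Set.univ (Set.subset_univ (Q a)) (G a) :=
    ⟨fun a => (S.isU_exists fs (Set.subset_univ (Q a)) Set.univ).choose,
     fun a => (S.isU_exists fs (Set.subset_univ (Q a)) Set.univ).choose_spec⟩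
  obtain ⟨Zc, hZc⟩ : ∃ Zc : ∀ a b, a ≤ b → (S.N Set.univ (T b) ⟶ S.N Set.univ (T a)),
      ∀ a b (h : a ≤ b), S.IsV Set.univ (hTm h) (Zc a b h) :=
    ⟨fun a b h => (S.isV_exists fs (hTm h) Set.univ).choose,
     fun a b h => (S.isV_exists fs (hTm h) Set.univ).choose_spec⟩
  obtain ⟨F, hF⟩ : ∃ F : ∀ a, (S.N Set.univ Set.univ ⟶ S.N Set.univ (T a)),
      ∀ a, S.IsV Set.univ (Set.subset_univ (T a)) (F a) :=
    ⟨fun a => (S.isV_exists fs (Set.subset_univ (T a)) Set.univ).choose,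
     fun a => (S.isV_exists fs (Set.subset_univ (T a)) Set.univ).choose_spec⟩
  have key : ∀ n₀ : ℕ, ∃ i, n₀ ≤ i ∧
      (¬ IsIso (W i (i+1) (Nat.le_succ i)) ∨ ¬ IsIso (Zc i (i+1) (Nat.le_succ i))) := by
    intro n₀
    obtain ⟨i, hi, hbad⟩ := hcon n₀
    refine ⟨i, hi, ?_⟩
    by_contra hno
    push_neg at hno
    refine hbad ⟨fun hQ _ u hu => ?_, fun hT _ v hv => ?_⟩
    · exact S.isU_iso fs hu (hW i (i+1) (Nat.le_succ i)) hno.1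
    · exact S.isV_iso fs hv (hZc i (i+1) (Nat.le_succ i)) hno.2
  by_cases hwu : ∀ n₀ : ℕ, ∃ i, n₀ ≤ i ∧ ¬ IsIso (W i (i+1) (Nat.le_succ i))
  · have claim : ∀ a : ℕ, ∃ b, ∃ hab : a < b, ¬ IsIso (W a b hab.le) := by
      intro a
      by_contra hc
      push_neg at hc
      obtain ⟨s, hs, hns⟩ := hwu a
      apply hns
      rcases Nat.eq_or_lt_of_le hs with heq | hlt
      · cases heq; exact hc (a+1) (Nat.lt_succ_self a)
      · have h1 : IsIso (W a s hs) := hc s hlt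
        have hcomp : W a s hs ≫ W s (s+1) (Nat.le_succ s) = W a (s+1) (by omega) :=
          S.isU_unique fs (S.isU_comp (hW a s hs) (hW s (s+1) (Nat.le_succ s)))
            (hW a (s+1) (by omega))
        have heq2 : W s (s+1) (Nat.le_succ s) = inv (W a s hs) ≫ W a (s+1) (by omega) := by
          rw [← hcomp, IsIso.inv_hom_id_assoc]
        have h2 : IsIso (W a (s+1) (by omega)) := hc (s+1) (by omega)
        rw [heq2]; infer_instance
    choose Fn hlt2 hni using claim
    set ψ : ℕ → ℕ := fun n => Fn^[n] 0 with hψdef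
    have hψs : ∀ n, ψ (n+1) = Fn (ψ n) := fun n => Function.iterate_succ_apply' Fn n 0
    have hψlt : ∀ n, ψ n < ψ (n+1) := fun n => by rw [hψs n]; exact hlt2 (ψ n)
    have hni' : ∀ a b (hab : a < b), b = Fn a → ¬ IsIso (W a b hab.le) := by
      intro a b hab hb; subst hb; exact hni a
    exact hnoeth.2 ⟨fun n => S.N (Q (ψ n)) Set.univ, fun n => G (ψ n),
      fun n => W (ψ n) (ψ (n+1)) (hψlt n).le, fun n => S.isU_M fs (hG (ψ n)),
      fun n => S.isU_M fs (hW _ _ _),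
      fun n => S.isU_unique fs (S.isU_comp (hW _ _ _) (hG (ψ (n+1)))) (hG (ψ n)),
      fun n => hni' (ψ n) (ψ (n+1)) (hψlt n) (hψs n)⟩
  · push_neg at hwu
    obtain ⟨n₁, hn₁⟩ := hwu
    have hzu : ∀ n₀ : ℕ, ∃ i, n₀ ≤ i ∧ ¬ IsIso (Zc i (i+1) (Nat.le_succ i)) := by
      intro n₀
      obtain ⟨i, hi, hd⟩ := key (max n₀ n₁)
      refine ⟨i, le_trans (le_max_left _ _) hi, ?_⟩
      rcases hd with hd | hd
      · exact absurd (hn₁ i (le_trans (le_max_right _ _) hi)) hd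
      · exact hd
    have claim : ∀ a : ℕ, ∃ b, ∃ hab : a < b, ¬ IsIso (Zc a b hab.le) := by
      intro a
      by_contra hc
      push_neg at hc
      obtain ⟨s, hs, hns⟩ := hzu a
      apply hns
      rcases Nat.eq_or_lt_of_le hs with heq | hlt
      · cases heq; exact hc (a+1) (Nat.lt_succ_self a)
      · have h1 : IsIso (Zc a s hs) := hc s hlt
        have hcomp : Zc s (s+1) (Nat.le_succ s) ≫ Zc a s hs = Zc a (s+1) (by omega) :=
          S.isV_unique fs (S.isV_comp (hZc a s hs) (hZc s (s+1) (Nat.le_succ s)))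
            (hZc a (s+1) (by omega))
        have heq2 : Zc s (s+1) (Nat.le_succ s) = Zc a (s+1) (by omega) ≫ inv (Zc a s hs) := by
          rw [← hcomp, Category.assoc, IsIso.hom_inv_id, Category.comp_id]
        have h2 : IsIso (Zc a (s+1) (by omega)) := hc (s+1) (by omega)
        rw [heq2]; infer_instance
    choose Fn hlt2 hni using claim
    set ψ : ℕ → ℕ := fun n => Fn^[n] 0 with hψdef
    have hψs : ∀ n, ψ (n+1) = Fn (ψ n) := fun n => Function.iterate_succ_apply' Fn n 0
    have hψlt : ∀ n, ψ n < ψ (n+1) := fun n => by rw [hψs n]; exact hlt2 (ψ n)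
    have hni' : ∀ a b (hab : a < b), b = Fn a → ¬ IsIso (Zc a b hab.le) := by
      intro a b hab hb; subst hb; exact hni a
    exact hnoeth.1 ⟨fun n => S.N Set.univ (T (ψ n)), fun n => F (ψ n),
      fun n => Zc (ψ n) (ψ (n+1)) (hψlt n).le, fun n => S.isV_E fs (hF (ψ n)),
      fun n => S.isV_E fs (hZc _ _ _),
      fun n => S.isV_unique fs (S.isV_comp (hZc _ _ _) (hF (ψ (n+1)))) (hF (ψ n)),
      fun n => hni' (ψ n) (ψ (n+1)) (hψlt n) (hψs n)⟩
end
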